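/- Let N and 𝒩 be positive integers and n ≥ 1 an integer. Let K and L be invertible N×N complex matrices, a an 𝒩×𝒩 complex diagonal matrix, and C a constant N×N complex matrix. Let r, s : ℂ → (N×𝒩 complex matrices) and M : ℂ → (N×N complex matrices) be functions such that at every t ∈ ℂ: r has derivative Kⁿ·r(t)·a, s has derivative −(Lᵀ)ⁿ·s(t)·a, M has derivative Σ_{l=0}^{n−1} K^{n−1−l}·r(t)·a·s(t)ᵀ·L^{l}, and C + M(t) is invertible. For i, j ∈ ℤ define S^{(i,j)}(t) := s(t)ᵀ·L^j·(C+M(t))⁻¹·K^i·r(t) (negative powers via inverses). Then at every t ∈ ℂ and for all integers i, j, the function S^{(i,j)} has derivative S^{(i+n,j)}(t)·a − a·S^{(i,j+n)}(t) − Σ_{l=0}^{n−1} S^{(n−1−l,j)}(t)·a·S^{(i,l)}(t). -/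

import Mathlib

open Matrix

attribute [local instance] Matrix.linftyOpNormedRing Matrix.linftyOpNormedAlgebra

private lemma entry_mul {m k n : Type*} [Fintype m] [Fintype k] [Fintype n]
    {A : ℂ → Matrix m k ℂ} {B : ℂ → Matrix k n ℂ} {A' : Matrix m k ℂ} {B' : Matrix k n ℂ}
    {t : ℂ}
    (hA : ∀ p q, HasDerivAt (fun u => A u p q) (A' p q) t)
    (hB : ∀ p q, HasDerivAt (fun u => B u p q) (B' p q) t) :
    ∀ p q, HasDerivAt (fun u => (A u * B u) p q) ((A' * B t + A t * B') p q) t := by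
  intro p q
  have h : (fun u => (A u * B u) p q) = fun u => ∑ x, A u p x * B u x q := by
    funext u; simp [Matrix.mul_apply]
  rw [h]
  have := HasDerivAt.fun_sum (fun x (_ : x ∈ Finset.univ) => (hA p x).mul (hB x q))
  refine this.congr_deriv ?_
  simp [Matrix.mul_apply, Matrix.add_apply, Finset.sum_add_distrib]

private lemma entry_mul_const {m k n : Type*} [Fintype m] [Fintype k] [Fintype n]
    {A : ℂ → Matrix m k ℂ} {A' : Matrix m k ℂ} {X : Matrix k n ℂ} {t : ℂ}
    (hA : ∀ p q, HasDerivAt (fun u => A u p q) (A' p q) t) :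
    ∀ p q, HasDerivAt (fun u => (A u * X) p q) ((A' * X) p q) t := by
  intro p q
  have := entry_mul (B := fun _ => X) (B' := 0) hA (fun p q => hasDerivAt_const t (X p q)) p q
  simpa using this

private noncomputable def matEquiv (N : ℕ) :
    Matrix (Fin N) (Fin N) ℂ ≃ₗ[ℂ] (Fin N → Fin N → ℂ) where
  toFun A := A
  invFun A := Matrix.of A
  map_add' _ _ := rfl
  map_smul' _ _ := rfl
  left_inv _ := rfl
  right_inv _ := rfl

private lemma hasDerivAt_matrix {N : ℕ} {f : ℂ → Matrix (Fin N) (Fin N) ℂ}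
    {f' : Matrix (Fin N) (Fin N) ℂ} {t : ℂ} :
    HasDerivAt f f' t ↔ ∀ p q, HasDerivAt (fun u => f u p q) (f' p q) t := by
  set e := (matEquiv N).toContinuousLinearEquiv with he
  have key : HasDerivAt f f' t ↔ HasDerivAt (fun u => e (f u)) (e f') t := by
    constructor
    · intro h
      exact (e.toContinuousLinearMap.hasFDerivAt).comp_hasDerivAt t h
    · intro h
      have := (e.symm.toContinuousLinearMap.hasFDerivAt).comp_hasDerivAt t h
      exact this
  rw [key, hasDerivAt_pi]
  constructor
  · intro h p q
    exact hasDerivAt_pi.1 (h p) q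
  · intro h p
    exact hasDerivAt_pi.2 (h p)

private lemma entry_inv {N : ℕ} {C : Matrix (Fin N) (Fin N) ℂ}
    {M : ℂ → Matrix (Fin N) (Fin N) ℂ} {M' : Matrix (Fin N) (Fin N) ℂ} {t : ℂ}
    (hM : ∀ p q, HasDerivAt (fun u => M u p q) (M' p q) t)
    (hCM : ∀ u : ℂ, IsUnit (C + M u).det) :
    ∀ p q, HasDerivAt (fun u => (C + M u)⁻¹ p q)
      ((-((C + M t)⁻¹ * M' * (C + M t)⁻¹)) p q) t := by
  have hg : HasDerivAt (fun u => C + M u) M' t := by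
    rw [hasDerivAt_matrix]
    intro p q
    have := (hM p q).const_add (C p q)
    simpa [Matrix.add_apply] using this
  have hunit : IsUnit (C + M t) := (Matrix.isUnit_iff_isUnit_det _).2 (hCM t)
  set x : (Matrix (Fin N) (Fin N) ℂ)ˣ := hunit.unit with hx
  have hxval : (x : Matrix (Fin N) (Fin N) ℂ) = C + M t := hunit.unit_spec
  have hfd := hasFDerivAt_ringInverse (𝕜 := ℂ) x
  rw [hxval] at hfd
  have hder := hfd.comp_hasDerivAt t hg
  have hxinv : ((x⁻¹ : (Matrix (Fin N) (Fin N) ℂ)ˣ) : Matrix (Fin N) (Fin N) ℂ)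
      = (C + M t)⁻¹ := by
    rw [Matrix.coe_units_inv, hxval]
  have hder2 : HasDerivAt (fun u => (C + M u)⁻¹)
      (-((C + M t)⁻¹ * M' * (C + M t)⁻¹)) t := by
    have heq : (fun u => Ring.inverse (C + M u)) = fun u => (C + M u)⁻¹ := by
      funext u; rw [Matrix.nonsing_inv_eq_ringInverse]
    have : HasDerivAt (fun u => Ring.inverse (C + M u))
        ((-ContinuousLinearMap.mulLeftRight ℂ _ ((x⁻¹ : _ˣ) : Matrix (Fin N) (Fin N) ℂ)
          ((x⁻¹ : _ˣ) : Matrix (Fin N) (Fin N) ℂ)) M') t := hder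
    rw [heq] at this
    convert this using 1
    simp [ContinuousLinearMap.mulLeftRight_apply, hxinv]
  exact hasDerivAt_matrix.1 hder2

theorem stmt_2 (N Nc : ℕ) (hN : 0 < N) (hNc : 0 < Nc) (n : ℕ) (hn : 1 ≤ n)
    (K L : Matrix (Fin N) (Fin N) ℂ) (hK : IsUnit K.det) (hL : IsUnit L.det)
    (d : Fin Nc → ℂ) (C : Matrix (Fin N) (Fin N) ℂ)
    (r s : ℂ → Matrix (Fin N) (Fin Nc) ℂ)
    (M : ℂ → Matrix (Fin N) (Fin N) ℂ)
    (hr : ∀ (t : ℂ) (p : Fin N) (q : Fin Nc),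
      HasDerivAt (fun u => r u p q) ((K ^ n * r t * Matrix.diagonal d) p q) t)
    (hs : ∀ (t : ℂ) (p : Fin N) (q : Fin Nc),
      HasDerivAt (fun u => s u p q) ((-((Lᵀ) ^ n * s t * Matrix.diagonal d)) p q) t)
    (hM : ∀ (t : ℂ) (p q : Fin N), HasDerivAt (fun u => M u p q)
      ((∑ l ∈ Finset.range n,
        K ^ (n - 1 - l) * r t * Matrix.diagonal d * (s t)ᵀ * L ^ l) p q) t)
    (hCM : ∀ t : ℂ, IsUnit (C + M t).det)
    (S : ℤ → ℤ → ℂ → Matrix (Fin Nc) (Fin Nc) ℂ)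
    (hS : ∀ (i j : ℤ) (t : ℂ), S i j t = (s t)ᵀ * (L ^ j) * (C + M t)⁻¹ * (K ^ i) * r t) :
    ∀ (t : ℂ) (i j : ℤ) (p q : Fin Nc), HasDerivAt (fun u => S i j u p q)
      ((S (i + (n : ℤ)) j t * Matrix.diagonal d - Matrix.diagonal d * S i (j + (n : ℤ)) t
        - ∑ l ∈ Finset.range n,
            S ((n : ℤ) - 1 - (l : ℤ)) j t * Matrix.diagonal d * S i (l : ℤ) t) p q) t := by
  intro t i j p q
  set D := Matrix.diagonal d with hD
  set W : Matrix (Fin N) (Fin N) ℂ := (C + M t)⁻¹ with hW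
  set M' : Matrix (Fin N) (Fin N) ℂ :=
    ∑ l ∈ Finset.range n, K ^ (n - 1 - l) * r t * D * (s t)ᵀ * L ^ l with hM'
  -- transpose of s derivative
  have hsT : ∀ p q, HasDerivAt (fun u => (s u)ᵀ p q)
      (((-((Lᵀ) ^ n * s t * D))ᵀ) p q) t := by
    intro p q
    simpa [Matrix.transpose_apply] using hs t q p
  -- step 1 : sᵀ * L^j
  have h1 := entry_mul_const (X := (L ^ j : Matrix (Fin N) (Fin N) ℂ)) hsT
  -- step 2 : * (C+M)⁻¹
  have hWd := entry_inv (hM t) hCM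
  have h2 := entry_mul h1 hWd
  -- step 3 : * K^i
  have h3 := entry_mul_const (X := (K ^ i : Matrix (Fin N) (Fin N) ℂ)) h2
  -- step 4 : * r
  have h4 := entry_mul h3 (hr t)
  -- the function equality
  have hfun : (fun u => S i j u p q)
      = fun u => ((s u)ᵀ * (L ^ j) * (C + M u)⁻¹ * (K ^ i) * r u) p q := by
    funext u; rw [hS]
  rw [hfun]
  have key : ((-((Lᵀ) ^ n * s t * D))ᵀ * L ^ j * (C + M t)⁻¹ +
        (s t)ᵀ * L ^ j *
          -(((C + M t)⁻¹ * ∑ l ∈ Finset.range n,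
              K ^ (n - 1 - l) * r t * D * (s t)ᵀ * L ^ l) * (C + M t)⁻¹)) *
        K ^ i * r t
      + (s t)ᵀ * L ^ j * (C + M t)⁻¹ * K ^ i * (K ^ n * r t * D)
      = S (i + (n : ℤ)) j t * D - D * S i (j + (n : ℤ)) t
        - ∑ l ∈ Finset.range n, S ((n : ℤ) - 1 - (l : ℤ)) j t * D * S i (l : ℤ) t := by
    have hLn : (L : Matrix (Fin N) (Fin N) ℂ) ^ (n : ℤ) = L ^ n := zpow_natCast L n
    have hKn : (K : Matrix (Fin N) (Fin N) ℂ) ^ (n : ℤ) = K ^ n := zpow_natCast K n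
    have hKadd : K ^ (i + (n : ℤ)) = K ^ i * K ^ n := by
      rw [Matrix.zpow_add hK, hKn]
    have hLadd : L ^ (j + (n : ℤ)) = L ^ n * L ^ j := by
      rw [add_comm, Matrix.zpow_add hL, hLn]
    have hET : (-((Lᵀ) ^ n * s t * D))ᵀ = -(D * (s t)ᵀ * L ^ n) := by
      rw [Matrix.transpose_neg, Matrix.transpose_mul, Matrix.transpose_mul,
        Matrix.transpose_pow, Matrix.transpose_transpose, hD, Matrix.diagonal_transpose]
      rw [Matrix.mul_assoc]
    have hsum_eq : ∑ l ∈ Finset.range n, S ((n : ℤ) - 1 - (l : ℤ)) j t * D * S i (l : ℤ) t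
        = ∑ l ∈ Finset.range n,
            ((s t)ᵀ * L ^ j * (C + M t)⁻¹ * K ^ (n - 1 - l) * r t) * D *
              ((s t)ᵀ * L ^ l * (C + M t)⁻¹ * K ^ i * r t) := by
      refine Finset.sum_congr rfl fun l hl => ?_
      have hl' : l < n := Finset.mem_range.1 hl
      have hcast : ((n : ℤ) - 1 - (l : ℤ)) = ((n - 1 - l : ℕ) : ℤ) := by omega
      rw [hS, hS, hcast, zpow_natCast, zpow_natCast]
    rw [hS, hS, hsum_eq, hKadd, hLadd, hET]
    simp only [Matrix.mul_sum, Matrix.sum_mul, Matrix.neg_mul, Matrix.mul_neg,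
      Matrix.add_mul, Matrix.mul_add, Matrix.mul_assoc, sub_eq_add_neg, neg_neg]
    abel
  have h5 := h4 p q
  rw [key] at h5
  exact h5
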